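/- Let G be a finite simple graph with graph Laplacian L and let 0<α<1. Let v,w be adjacent vertices with degrees d_v, d_w. Then, as t→0⁺, the subdiffusive distance satisfies 𝒟_{α,t}(v,w) = 2 − (t^α/Γ(α+1))·(d_v + d_w + 2) + O(t^{2α}); that is, t ↦ 𝒟_{α,t}(v,w) − 2 + (t^α/Γ(α+1))·(d_v+d_w+2) is O(t^{2α}) as t tends to 0 from the right. -/

import Mathlib

open Matrix Asymptotics Filter

/-- The Mittag-Leffler matrix function `E_α(M) = ∑_{k=0}^∞ M^k/Γ(αk+1)`, defined entrywise. -/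
noncomputable def mittagLefflerMatrix {n : ℕ} (α : ℝ) (M : Matrix (Fin n) (Fin n) ℝ) :
    Matrix (Fin n) (Fin n) ℝ :=
  Matrix.of fun i j => ∑' k : ℕ, ((M ^ k) i j) / Real.Gamma (α * k + 1)

/-- The subdiffusive distance
`𝒟_{α,t}(v,w) = (E_α(−t^αL))_{vv} + (E_α(−t^αL))_{ww} − 2(E_α(−t^αL))_{vw}`. -/
noncomputable def subdiffDist {n : ℕ} (G : SimpleGraph (Fin n)) [DecidableRel G.Adj]
    (α t : ℝ) (v w : Fin n) : ℝ :=
  mittagLefflerMatrix α (-(t ^ α) • G.lapMatrix ℝ) v v +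
    mittagLefflerMatrix α (-(t ^ α) • G.lapMatrix ℝ) w w -
    2 * mittagLefflerMatrix α (-(t ^ α) • G.lapMatrix ℝ) v w

/-- For `x ≥ 1`, `Γ(x) ≥ 1/2`. -/
lemma gamma_half_le {x : ℝ} (hx : 1 ≤ x) : (1 / 2 : ℝ) ≤ Real.Gamma x := by
  have hmono := Real.Gamma_strictMonoOn_Ici.monotoneOn
  rcases le_or_gt 2 x with h | h
  · have := hmono (Set.mem_Ici.2 le_rfl) (Set.mem_Ici.2 h) h
    rw [Real.Gamma_two] at this
    linarith
  · have hx0 : x ≠ 0 := by linarith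
    have h1 : Real.Gamma (x + 1) = x * Real.Gamma x := Real.Gamma_add_one hx0
    have h2 : (1 : ℝ) ≤ Real.Gamma (x + 1) := by
      have := hmono (Set.mem_Ici.2 le_rfl) (Set.mem_Ici.2 (by linarith : (2:ℝ) ≤ x + 1))
        (by linarith)
      rw [Real.Gamma_two] at this
      linarith
    nlinarith [Real.Gamma_pos_of_pos (show (0:ℝ) < x by linarith)]

/-- Small-time expansion of the subdiffusive distance between adjacent vertices:
`𝒟_{α,t}(v,w) = 2 − (t^α/Γ(α+1))·(d_v + d_w + 2) + O(t^{2α})` as `t → 0⁺`. -/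
theorem subdiffDist_small_time_expansion
    (n : ℕ) (G : SimpleGraph (Fin n)) [DecidableRel G.Adj]
    (α : ℝ) (hα0 : 0 < α) (hα1 : α < 1)
    (v w : Fin n) (hadj : G.Adj v w) :
    (fun t : ℝ => subdiffDist G α t v w - 2 +
        t ^ α / Real.Gamma (α + 1) * ((G.degree v : ℝ) + (G.degree w : ℝ) + 2))
      =O[nhdsWithin 0 (Set.Ioi 0)] (fun t : ℝ => t ^ (2 * α)) := by
  classical
  set L : Matrix (Fin n) (Fin n) ℝ := G.lapMatrix ℝ with hLdef
  set B : ℝ := (∑ i, ∑ j, |L i j|) + 1 with hBdef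
  have hB1 : (1 : ℝ) ≤ B := by
    have : (0:ℝ) ≤ ∑ i, ∑ j, |L i j| :=
      Finset.sum_nonneg fun i _ => Finset.sum_nonneg fun j _ => abs_nonneg _
    simp [hBdef]; linarith
  have hB0 : (0 : ℝ) < B := lt_of_lt_of_le one_pos hB1
  -- column sums bounded by B
  have hcol : ∀ j : Fin n, (∑ m, |L m j|) ≤ B := by
    intro j
    have : (∑ m, |L m j|) ≤ ∑ i, ∑ j', |L i j'| := by
      apply Finset.sum_le_sum
      intro m _
      exact Finset.single_le_sum (fun j' _ => abs_nonneg (L m j')) (Finset.mem_univ j)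
    linarith
  -- entrywise bound on powers of L
  have hE : ∀ k : ℕ, ∀ i j : Fin n, |(L ^ k) i j| ≤ B ^ k := by
    intro k
    induction k with
    | zero =>
      intro i j
      simp only [pow_zero, Matrix.one_apply]
      split <;> simp
    | succ k ih =>
      intro i j
      rw [pow_succ, Matrix.mul_apply]
      calc |∑ m, (L ^ k) i m * L m j| ≤ ∑ m, |(L ^ k) i m * L m j| :=
            Finset.abs_sum_le_sum_abs _ _
        _ ≤ ∑ m, B ^ k * |L m j| := by
            apply Finset.sum_le_sum
            intro m _
            rw [abs_mul]
            exact mul_le_mul_of_nonneg_right (ih i m) (abs_nonneg _)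
        _ = B ^ k * ∑ m, |L m j| := by rw [Finset.mul_sum]
        _ ≤ B ^ k * B := by
            exact mul_le_mul_of_nonneg_left (hcol j)
              (pow_nonneg (le_of_lt hB0) k)
  -- Gamma bounds
  have hΓpos : ∀ k : ℕ, (0 : ℝ) < Real.Gamma (α * k + 1) := by
    intro k
    apply Real.Gamma_pos_of_pos
    positivity
  have hΓhalf : ∀ k : ℕ, (1 / 2 : ℝ) ≤ Real.Gamma (α * k + 1) := by
    intro k
    apply gamma_half_le
    have : (0:ℝ) ≤ α * k := by positivity
    linarith
  have hΓinv : ∀ k : ℕ, |(Real.Gamma (α * k + 1))⁻¹| ≤ 2 := by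
    intro k
    rw [abs_of_nonneg (inv_nonneg.2 (hΓpos k).le)]
    rw [inv_le_comm₀ (hΓpos k) (by norm_num)]
    have := hΓhalf k
    linarith
  -- the combined coefficients
  set q : ℕ → ℝ := fun k => (L ^ k) v v + (L ^ k) w w - 2 * (L ^ k) v w with hq
  have hq0 : q 0 = 2 := by
    have hvw : v ≠ w := hadj.ne
    norm_num [hq, Matrix.one_apply, hvw]
  have hq1 : q 1 = (G.degree v : ℝ) + (G.degree w : ℝ) + 2 := by
    have hvw : v ≠ w := hadj.ne
    have hwv : G.Adj w v := hadj.symm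
    simp [hq, hLdef, SimpleGraph.lapMatrix, SimpleGraph.degMatrix, Matrix.sub_apply,
      Matrix.diagonal_apply_eq, Matrix.diagonal_apply_ne _ hvw, SimpleGraph.adjMatrix_apply,
      hadj, hvw]
  have hqbd : ∀ k, |q k| ≤ 4 * B ^ k := by
    intro k
    have h1 := hE k v v
    have h2 := hE k w w
    have h3 := hE k v w
    calc |q k| ≤ |(L ^ k) v v| + |(L ^ k) w w| + 2 * |(L ^ k) v w| := by
          simp only [hq]
          calc |(L ^ k) v v + (L ^ k) w w - 2 * (L ^ k) v w|
              ≤ |(L ^ k) v v + (L ^ k) w w| + |2 * (L ^ k) v w| := abs_sub _ _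
            _ ≤ |(L ^ k) v v| + |(L ^ k) w w| + 2 * |(L ^ k) v w| := by
                rw [abs_mul, abs_two]
                exact add_le_add (abs_add_le _ _) le_rfl
      _ ≤ 4 * B ^ k := by nlinarith
  -- eventually, t^α * B ≤ 1/2
  have htend : Tendsto (fun t : ℝ => t ^ α) (nhdsWithin 0 (Set.Ioi 0)) (nhds 0) := by
    have hc : ContinuousAt (fun t : ℝ => t ^ α) 0 :=
      Real.continuousAt_rpow_const 0 α (Or.inr hα0.le)
    have := hc.tendsto.mono_left (nhdsWithin_le_nhds (s := Set.Ioi (0:ℝ)))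
    simpa [Real.zero_rpow hα0.ne'] using this
  have hev : ∀ᶠ t in nhdsWithin 0 (Set.Ioi 0), t ^ α < 1 / (2 * B) :=
    htend.eventually_lt_const (by positivity)
  rw [Asymptotics.isBigO_iff]
  refine ⟨16 * B ^ 2, ?_⟩
  filter_upwards [self_mem_nhdsWithin, hev] with t ht hlt
  have ht0 : (0 : ℝ) < t := ht
  set s : ℝ := t ^ α with hs
  have hs0 : 0 < s := Real.rpow_pos_of_pos ht0 α
  have hsB : s * B ≤ 1 / 2 := by
    have : s * B < (1 / (2 * B)) * B := by
      exact mul_lt_mul_of_pos_right hlt hB0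
    rw [div_mul_eq_mul_div, one_mul, mul_comm] at this
    rw [mul_comm 2 B] at this
    have h2 : B / (B * 2) = 1 / 2 := by
      field_simp
    linarith [this, h2]
  have hsB0 : 0 ≤ s * B := by positivity
  -- entry series
  have hMk : ∀ k : ℕ, ((-(s) • L) ^ k : Matrix (Fin n) (Fin n) ℝ) = (-s) ^ k • L ^ k := by
    intro k
    rw [smul_pow]
  have hterm : ∀ (i j : Fin n) (k : ℕ),
      ((-(s) • L) ^ k) i j / Real.Gamma (α * k + 1)
        = (-s) ^ k * (L ^ k) i j / Real.Gamma (α * k + 1) := by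
    intro i j k
    rw [hMk k]
    simp [Matrix.smul_apply, smul_eq_mul]
  -- summability
  have hgeo : Summable (fun k : ℕ => ((1:ℝ)/2) ^ k) :=
    summable_geometric_of_lt_one (by norm_num) (by norm_num)
  have hbound : ∀ (i j : Fin n) (k : ℕ),
      |(-s) ^ k * (L ^ k) i j / Real.Gamma (α * k + 1)| ≤ 8 * (1/2 : ℝ) ^ k := by
    intro i j k
    rw [div_eq_mul_inv, abs_mul, abs_mul]
    have h1 : |(-s) ^ k| = s ^ k := by
      rw [abs_pow, abs_neg, abs_of_pos hs0]
    have h2 : |(L ^ k) i j| ≤ B ^ k := hE k i j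
    have h3 : |(Real.Gamma (α * k + 1))⁻¹| ≤ 2 := hΓinv k
    have hsBk : s ^ k * B ^ k ≤ (1/2 : ℝ) ^ k := by
      rw [← mul_pow]
      exact pow_le_pow_left₀ hsB0 hsB k
    calc |(-s) ^ k| * |(L ^ k) i j| * |(Real.Gamma (α * k + 1))⁻¹|
        ≤ s ^ k * B ^ k * 2 := by
          rw [h1]
          apply mul_le_mul
          · exact mul_le_mul_of_nonneg_left h2 (by positivity)
          · exact h3
          · exact abs_nonneg _
          · positivity
      _ ≤ (1/2:ℝ) ^ k * 2 := by nlinarith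
      _ ≤ 8 * (1/2:ℝ) ^ k := by nlinarith [pow_nonneg (by norm_num : (0:ℝ) ≤ 1/2) k]
  have hsumm : ∀ (i j : Fin n),
      Summable (fun k : ℕ => (-s) ^ k * (L ^ k) i j / Real.Gamma (α * k + 1)) := by
    intro i j
    apply Summable.of_norm_bounded (hgeo.mul_left 8)
    intro k
    rw [Real.norm_eq_abs]
    exact hbound i j k
  -- subdiffDist as a single tsum of g
  set g : ℕ → ℝ := fun k => (-s) ^ k * q k / Real.Gamma (α * k + 1) with hgdef
  have hgsplit : ∀ k, g k =
      (-s) ^ k * (L ^ k) v v / Real.Gamma (α * k + 1)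
      + (-s) ^ k * (L ^ k) w w / Real.Gamma (α * k + 1)
      - 2 * ((-s) ^ k * (L ^ k) v w / Real.Gamma (α * k + 1)) := by
    intro k
    simp only [hgdef, hq]
    field_simp
  have hgsumm : Summable g := by
    rw [funext hgsplit]
    exact ((hsumm v v).add (hsumm w w)).sub ((hsumm v w).mul_left 2)
  have hsub : subdiffDist G α t v w = ∑' k, g k := by
    unfold subdiffDist mittagLefflerMatrix
    simp only [Matrix.of_apply]
    have hrw : ∀ (i j : Fin n),
        (∑' k : ℕ, ((-(t ^ α) • G.lapMatrix ℝ) ^ k) i j / Real.Gamma (α * k + 1))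
          = ∑' k : ℕ, (-s) ^ k * (L ^ k) i j / Real.Gamma (α * k + 1) := by
      intro i j
      apply tsum_congr
      intro k
      exact hterm i j k
    rw [hrw v v, hrw w w, hrw v w, funext hgsplit,
      Summable.tsum_sub ((hsumm v v).add (hsumm w w)) ((hsumm v w).mul_left 2),
      Summable.tsum_add (hsumm v v) (hsumm w w), tsum_mul_left]
  -- the LHS equals the tail sum
  have hg0 : g 0 = 2 := by
    simp [hgdef, hq0]
  have hg1 : g 1 = -(s / Real.Gamma (α + 1) * ((G.degree v : ℝ) + (G.degree w : ℝ) + 2)) := by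
    simp only [hgdef, hq1, pow_one]
    rw [show α * (1:ℕ) + 1 = α + 1 by push_cast; ring]
    field_simp
  have htail : subdiffDist G α t v w - 2 +
      s / Real.Gamma (α + 1) * ((G.degree v : ℝ) + (G.degree w : ℝ) + 2)
        = ∑' k, g (k + 2) := by
    have := Summable.sum_add_tsum_nat_add 2 hgsumm
    rw [hsub, ← this]
    rw [Finset.sum_range_succ, Finset.sum_range_one, hg0, hg1]
    ring
  -- bound the tail
  have htailbound : |∑' k, g (k + 2)| ≤ 16 * B ^ 2 * s ^ 2 := by
    have hb : ∀ k : ℕ, |g (k + 2)| ≤ (8 * (s * B) ^ 2) * (1/2 : ℝ) ^ k := by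
      intro k
      have h1 : |g (k + 2)| ≤ 8 * (s * B) ^ (k + 2) := by
        have hΓ2 := hΓinv (k+2)
        have hq2 := hqbd (k+2)
        simp only [hgdef]
        rw [div_eq_mul_inv, abs_mul, abs_mul, abs_pow, abs_neg, abs_of_pos hs0]
        push_cast at hΓ2 ⊢
        calc s ^ (k+2) * |q (k+2)| * |(Real.Gamma (α * ((k:ℝ)+2) + 1))⁻¹|
            ≤ s ^ (k+2) * (4 * B ^ (k+2)) * 2 := by
              apply mul_le_mul
              · exact mul_le_mul_of_nonneg_left hq2 (by positivity)
              · exact hΓ2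
              · exact abs_nonneg _
              · positivity
          _ = 8 * (s * B) ^ (k+2) := by rw [mul_pow]; ring
      have h2 : (s * B) ^ (k + 2) ≤ (s * B) ^ 2 * (1/2:ℝ) ^ k := by
        rw [show k + 2 = 2 + k by ring, pow_add]
        apply mul_le_mul_of_nonneg_left _ (by positivity)
        calc (s*B) ^ k ≤ (1/2:ℝ) ^ k := pow_le_pow_left₀ hsB0 hsB k
          _ = (1/2:ℝ) ^ k := rfl
      calc |g (k + 2)| ≤ 8 * (s * B) ^ (k + 2) := h1
        _ ≤ 8 * ((s * B) ^ 2 * (1/2:ℝ) ^ k) := by linarith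
        _ = (8 * (s * B) ^ 2) * (1/2:ℝ) ^ k := by ring
    have hsummtail : Summable (fun k => g (k + 2)) := hgsumm.comp_injective (add_left_injective 2)
    have hsummnorm : Summable (fun k => |g (k + 2)|) := by
      apply Summable.of_nonneg_of_le (fun k => abs_nonneg _) hb (hgeo.mul_left _)
    calc |∑' k, g (k + 2)| ≤ ∑' k, |g (k + 2)| := by
          simpa using norm_tsum_le_tsum_norm (f := fun k => g (k+2)) (by simpa using hsummnorm)
      _ ≤ ∑' k : ℕ, (8 * (s * B) ^ 2) * (1/2:ℝ) ^ k :=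
          Summable.tsum_le_tsum hb hsummnorm (hgeo.mul_left _)
      _ = (8 * (s * B) ^ 2) * ∑' k : ℕ, (1/2:ℝ) ^ k := tsum_mul_left
      _ = (8 * (s * B) ^ 2) * 2 := by
          rw [tsum_geometric_of_lt_one (by norm_num) (by norm_num)]
          norm_num
      _ = 16 * B ^ 2 * s ^ 2 := by ring
  -- conclude
  have hts : t ^ (2 * α) = s ^ 2 := by
    rw [two_mul, Real.rpow_add ht0, hs, sq]
  rw [Real.norm_eq_abs, Real.norm_eq_abs, htail, hts, abs_of_nonneg (by positivity : (0:ℝ) ≤ s ^ 2)]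
  calc |∑' k, g (k + 2)| ≤ 16 * B ^ 2 * s ^ 2 := htailbound
    _ = 16 * B ^ 2 * s ^ 2 := rfl
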